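/- Let n ∈ ℕ, let c > 0 be a real number, let D ∈ ℝ^{n×n} be a symmetric matrix, let σ ∈ ℝⁿ be a fixed vector, and let V : ℝ → ℝ^{n×n} be a matrix-valued function that is differentiable at t₀ ∈ ℝ, such that V(t) is symmetric for every t and the matrix A(t) := I + V(t)·D is invertible for every t. Define λ(t) := A(t)⁻¹ · (c · V(t)·σ) and ν(t) := c·σ − D·λ(t). Then (i) λ(t) = V(t)·ν(t) and A(t)ᵀ·ν(t) = c·σ for every t, and (ii) the scalar function t ↦ σ · λ(t) is differentiable at t₀ with derivative equal to (1/c) · ν(t₀) · (V′(t₀) · ν(t₀)), where V′(t₀) denotes the derivative of V at t₀ and · between vectors denotes the Euclidean inner product. -/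

import Mathlib

set_option linter.unnecessarySimpa false


open Matrix

section Aux

variable {n : ℕ} {t₀ : ℝ}

private lemma dot_transpose (M : Matrix (Fin n) (Fin n) ℝ) (x y : Fin n → ℝ) :
    x ⬝ᵥ (M *ᵥ y) = (Mᵀ *ᵥ x) ⬝ᵥ y := by
  rw [Matrix.dotProduct_mulVec, Matrix.mulVec_transpose]

private lemma dot_symm {M : Matrix (Fin n) (Fin n) ℝ} (hM : M.IsSymm) (x y : Fin n → ℝ) :
    x ⬝ᵥ (M *ᵥ y) = y ⬝ᵥ (M *ᵥ x) := by
  rw [dot_transpose, hM.eq, dotProduct_comm]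

private lemma hasDerivAt_entry_mul {M N : ℝ → Matrix (Fin n) (Fin n) ℝ}
    {M' N' : Matrix (Fin n) (Fin n) ℝ}
    (hM : ∀ i j, HasDerivAt (fun t => M t i j) (M' i j) t₀)
    (hN : ∀ i j, HasDerivAt (fun t => N t i j) (N' i j) t₀) (i j : Fin n) :
    HasDerivAt (fun t => (M t * N t) i j) ((M' * N t₀ + M t₀ * N') i j) t₀ := by
  simp only [Matrix.mul_apply, Matrix.add_apply, ← Finset.sum_add_distrib]
  exact HasDerivAt.fun_sum fun k _ => (hM i k).mul (hN k j)

private lemma hasDerivAt_dotMul {M : ℝ → Matrix (Fin n) (Fin n) ℝ}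
    {M' : Matrix (Fin n) (Fin n) ℝ}
    (hM : ∀ i j, HasDerivAt (fun t => M t i j) (M' i j) t₀) (x y : Fin n → ℝ) :
    HasDerivAt (fun t => x ⬝ᵥ (M t *ᵥ y)) (x ⬝ᵥ (M' *ᵥ y)) t₀ := by
  simp only [dotProduct, Matrix.mulVec, Finset.mul_sum]
  exact HasDerivAt.fun_sum fun i _ => HasDerivAt.fun_sum fun j _ =>
    ((hM i j).mul_const (y j)).const_mul (x i)

private lemma hasDerivAt_quad_zero {w : ℝ → Fin n → ℝ} {B : ℝ → Matrix (Fin n) (Fin n) ℝ}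
    (hw : ∀ i, DifferentiableAt ℝ (fun t => w t i) t₀)
    (hB : ∀ i j, DifferentiableAt ℝ (fun t => B t i j) t₀)
    (h0 : ∀ i, w t₀ i = 0) :
    HasDerivAt (fun t => w t ⬝ᵥ (B t *ᵥ w t)) 0 t₀ := by
  have h : HasDerivAt (fun t => w t ⬝ᵥ (B t *ᵥ w t)) (∑ i : Fin n, ∑ _j : Fin n, (0 : ℝ)) t₀ := by
    simp only [dotProduct, Matrix.mulVec, Finset.mul_sum]
    refine HasDerivAt.fun_sum fun i _ => HasDerivAt.fun_sum fun j _ => ?_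
    have h3 := (hw i).hasDerivAt.mul ((hB i j).hasDerivAt.mul (hw j).hasDerivAt)
    refine h3.congr_deriv ?_
    simp [h0]
  simpa using h

private lemma differentiableAt_det {M : ℝ → Matrix (Fin n) (Fin n) ℝ}
    (hM : ∀ i j, DifferentiableAt ℝ (fun t => M t i j) t₀) :
    DifferentiableAt ℝ (fun t => (M t).det) t₀ := by
  simp only [Matrix.det_apply']
  exact DifferentiableAt.fun_sum fun p _ =>
    (DifferentiableAt.fun_finsetProd fun i _ => hM (p i) i).const_mul _

private lemma differentiableAt_adjugate {M : ℝ → Matrix (Fin n) (Fin n) ℝ}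
    (hM : ∀ i j, DifferentiableAt ℝ (fun t => M t i j) t₀) (i j : Fin n) :
    DifferentiableAt ℝ (fun t => (M t).adjugate i j) t₀ := by
  simp only [Matrix.adjugate_apply]
  apply differentiableAt_det
  intro k l
  simp only [Matrix.updateRow_apply]
  rcases eq_or_ne k j with hk | hk
  · simpa [hk] using differentiableAt_const (Pi.single i (1 : ℝ) l)
  · simpa [hk] using hM k l

private lemma differentiableAt_inv_entry {M : ℝ → Matrix (Fin n) (Fin n) ℝ}
    (hM : ∀ i j, DifferentiableAt ℝ (fun t => M t i j) t₀)
    (hdet : (M t₀).det ≠ 0) (i j : Fin n) :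
    DifferentiableAt ℝ (fun t => (M t)⁻¹ i j) t₀ := by
  simp only [Matrix.inv_def, Ring.inverse_eq_inv, Matrix.smul_apply, smul_eq_mul]
  exact ((differentiableAt_det hM).inv hdet).mul (differentiableAt_adjugate hM i j)

end Aux

/-- The finite-dimensional linear-algebraic core of the equivalence of the
energy-based and field-based definitions of the electrostatic forces: with
`A t = 1 + V t * D`, `λ t = (A t)⁻¹ (c • V t σ)` and `ν t = c • σ - D (λ t)`, one has
`λ t = V t ν t`, `(A t)ᵀ ν t = c • σ`, and the derivative of `t ↦ σ ⬝ᵥ λ t` at `t₀` equals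
`(1/c) * (ν t₀ ⬝ᵥ V' (ν t₀))`. -/
theorem stmt0
    (n : ℕ) (c : ℝ) (hc : 0 < c)
    (D : Matrix (Fin n) (Fin n) ℝ) (hD : D.IsSymm)
    (σ : Fin n → ℝ)
    (V : ℝ → Matrix (Fin n) (Fin n) ℝ) (V' : Matrix (Fin n) (Fin n) ℝ) (t₀ : ℝ)
    (hV : ∀ i j, HasDerivAt (fun t => V t i j) (V' i j) t₀)
    (hVsymm : ∀ t, (V t).IsSymm)
    (hA : ∀ t : ℝ, IsUnit (1 + V t * D))
    (lam ν : ℝ → Fin n → ℝ)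
    (hlam : ∀ t, lam t = (1 + V t * D)⁻¹ *ᵥ (c • (V t *ᵥ σ)))
    (hν : ∀ t, ν t = c • σ - D *ᵥ lam t) :
    (∀ t, lam t = V t *ᵥ ν t ∧ (1 + V t * D)ᵀ *ᵥ ν t = c • σ) ∧
      HasDerivAt (fun t => σ ⬝ᵥ lam t)
        ((1 / c) * (ν t₀ ⬝ᵥ (V' *ᵥ ν t₀))) t₀ := by
  have hcne : c ≠ 0 := ne_of_gt hc
  -- A t *ᵥ lam t = c • (V t *ᵥ σ)
  have hAmul : ∀ t, lam t + (V t * D) *ᵥ lam t = c • (V t *ᵥ σ) := by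
    intro t
    have h1 : (1 + V t * D) *ᵥ lam t = c • (V t *ᵥ σ) := by
      rw [hlam t, Matrix.mulVec_mulVec,
        Matrix.mul_nonsing_inv _ ((Matrix.isUnit_iff_isUnit_det _).mp (hA t)),
        Matrix.one_mulVec]
    rwa [Matrix.add_mulVec, Matrix.one_mulVec] at h1
  -- part (i), first half
  have part1a : ∀ t, lam t = V t *ᵥ ν t := by
    intro t
    rw [hν t, Matrix.mulVec_sub, Matrix.mulVec_smul, Matrix.mulVec_mulVec]
    have := hAmul t
    exact eq_sub_of_add_eq this
  -- part (i), second half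
  have part1b : ∀ t, (1 + V t * D)ᵀ *ᵥ ν t = c • σ := by
    intro t
    have htr : (1 + V t * D)ᵀ = 1 + D * V t := by
      rw [Matrix.transpose_add, Matrix.transpose_one, Matrix.transpose_mul, hD.eq,
        (hVsymm t).eq]
    rw [htr, Matrix.add_mulVec, Matrix.one_mulVec, ← Matrix.mulVec_mulVec, ← part1a t, hν t]
    abel
  -- symmetry of V'
  have hV'symm : V'.IsSymm := by
    show V'ᵀ = V'
    ext i j
    rw [Matrix.transpose_apply]
    have h1 : HasDerivAt (fun t => V t i j) (V' j i) t₀ := by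
      have heq : (fun t => V t j i) = fun t => V t i j := by
        funext t
        exact congrFun (congrFun (hVsymm t) i) j
      rw [← heq]; exact hV j i
    exact h1.unique (hV i j)
  -- differentiability facts
  have hVd : ∀ i j, DifferentiableAt ℝ (fun t => V t i j) t₀ := fun i j =>
    (hV i j).differentiableAt
  have hVD : ∀ i j, HasDerivAt (fun t => (V t * D) i j) ((V' * D) i j) t₀ := by
    intro i j
    have h := hasDerivAt_entry_mul (N := fun _ => D) (N' := 0) hV
      (fun _ _ => hasDerivAt_const _ _) i j
    simpa using h
  have hAd : ∀ i j, DifferentiableAt ℝ (fun t => (1 + V t * D) i j) t₀ := by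
    intro i j
    have heq : (fun t => (1 + V t * D) i j)
        = fun t => (1 : Matrix (Fin n) (Fin n) ℝ) i j + (V t * D) i j := by
      funext t; rw [Matrix.add_apply]
    rw [heq]
    exact (differentiableAt_const _).add (hVD i j).differentiableAt
  have hdet0 : (1 + V t₀ * D).det ≠ 0 :=
    isUnit_iff_ne_zero.mp ((Matrix.isUnit_iff_isUnit_det _).mp (hA t₀))
  have hlamd : ∀ i, DifferentiableAt ℝ (fun t => lam t i) t₀ := by
    intro i
    have heq : (fun t => lam t i)
        = fun t => ∑ j, (1 + V t * D)⁻¹ i j * (c * ∑ k, V t j k * σ k) := by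
      funext t
      rw [hlam t]
      simp [Matrix.mulVec, dotProduct, mul_comm]
    rw [heq]
    exact DifferentiableAt.fun_sum fun j _ =>
      (differentiableAt_inv_entry hAd hdet0 i j).mul
        ((DifferentiableAt.fun_sum fun k _ => (hVd j k).mul_const (σ k)).const_mul c)
  have hνd : ∀ i, DifferentiableAt ℝ (fun t => ν t i) t₀ := by
    intro i
    have heq : (fun t => ν t i) = fun t => c * σ i - ∑ j, D i j * lam t j := by
      funext t
      rw [hν t]
      simp [Matrix.mulVec, dotProduct]
    rw [heq]
    exact (differentiableAt_const _).sub
      (DifferentiableAt.fun_sum fun j _ => (hlamd j).const_mul _)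
  -- the quadratic-form matrix B t = V t + V t * D * V t
  have hBe : ∀ i j, HasDerivAt (fun t => (V t + V t * D * V t) i j)
      ((V' + (V' * D * V t₀ + V t₀ * D * V')) i j) t₀ := by
    intro i j
    have h2 := hasDerivAt_entry_mul hVD hV i j
    have h := (hV i j).fun_add h2
    simpa [Matrix.add_apply] using h
  have hBν : ∀ t, (V t + V t * D * V t) *ᵥ ν t = c • (V t *ᵥ σ) := by
    intro t
    rw [Matrix.add_mulVec, ← Matrix.mulVec_mulVec (M := V t * D) (N := V t), ← part1a t]
    exact hAmul t
  have hBsymm : ∀ t, (V t + V t * D * V t).IsSymm := by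
    intro t
    show (V t + V t * D * V t)ᵀ = V t + V t * D * V t
    rw [Matrix.transpose_add, Matrix.transpose_mul, Matrix.transpose_mul, hD.eq,
      (hVsymm t).eq, mul_assoc]
  -- g and r decomposition
  set g : ℝ → ℝ := fun t => 2 * (ν t₀ ⬝ᵥ (V t *ᵥ σ))
      - (1 / c) * (ν t₀ ⬝ᵥ ((V t + V t * D * V t) *ᵥ ν t₀)) with hgdef
  set r : ℝ → ℝ := fun t =>
      (1 / c) * ((ν t - ν t₀) ⬝ᵥ ((V t + V t * D * V t) *ᵥ (ν t - ν t₀))) with hrdef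
  have key : ∀ t, σ ⬝ᵥ lam t = g t + r t := by
    intro t
    have e1 : σ ⬝ᵥ lam t = ν t ⬝ᵥ (V t *ᵥ σ) := by
      rw [part1a t, dot_symm (hVsymm t)]
    have e2 : ν t ⬝ᵥ ((V t + V t * D * V t) *ᵥ ν t) = c * (ν t ⬝ᵥ (V t *ᵥ σ)) := by
      rw [hBν t, dotProduct_smul, smul_eq_mul]
    have e3 : ν t ⬝ᵥ ((V t + V t * D * V t) *ᵥ ν t₀) = c * (ν t₀ ⬝ᵥ (V t *ᵥ σ)) := by
      rw [dot_symm (hBsymm t), hBν t, dotProduct_smul, smul_eq_mul]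
    have e4 : ν t₀ ⬝ᵥ ((V t + V t * D * V t) *ᵥ ν t) = c * (ν t₀ ⬝ᵥ (V t *ᵥ σ)) := by
      rw [hBν t, dotProduct_smul, smul_eq_mul]
    have e5 : (ν t - ν t₀) ⬝ᵥ ((V t + V t * D * V t) *ᵥ (ν t - ν t₀))
        = (c * (ν t ⬝ᵥ (V t *ᵥ σ)) - c * (ν t₀ ⬝ᵥ (V t *ᵥ σ)))
          - (c * (ν t₀ ⬝ᵥ (V t *ᵥ σ)) - ν t₀ ⬝ᵥ ((V t + V t * D * V t) *ᵥ ν t₀)) := by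
      rw [Matrix.mulVec_sub, sub_dotProduct, dotProduct_sub,
        dotProduct_sub, e2, e3, e4]
    rw [e1]
    simp only [hgdef, hrdef]
    rw [e5]
    field_simp
    ring
  -- derivative of g
  have hg : HasDerivAt g (2 * (ν t₀ ⬝ᵥ (V' *ᵥ σ))
      - (1 / c) * (ν t₀ ⬝ᵥ ((V' + (V' * D * V t₀ + V t₀ * D * V')) *ᵥ ν t₀))) t₀ :=
    (HasDerivAt.const_mul 2 (hasDerivAt_dotMul hV _ _)).sub
      (HasDerivAt.const_mul (1 / c) (hasDerivAt_dotMul hBe _ _))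
  -- derivative of r is zero
  have hr : HasDerivAt r 0 t₀ := by
    have h0 := hasDerivAt_quad_zero (w := fun t => ν t - ν t₀)
      (B := fun t => V t + V t * D * V t)
      (fun i => by
        simpa [Pi.sub_apply] using (hνd i).sub (differentiableAt_const (ν t₀ i)))
      (fun i j => (hBe i j).differentiableAt)
      (fun i => by simp)
    have h1 := HasDerivAt.const_mul (1 / c) h0
    rw [mul_zero] at h1
    exact h1
  -- assemble
  refine ⟨fun t => ⟨part1a t, part1b t⟩, ?_⟩
  have hDlam : D *ᵥ lam t₀ = c • σ - ν t₀ := by rw [hν t₀]; abel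
  have hq : ν t₀ ⬝ᵥ ((V' + (V' * D * V t₀ + V t₀ * D * V')) *ᵥ ν t₀)
      = ν t₀ ⬝ᵥ (V' *ᵥ ν t₀)
        + (2 * (c * (ν t₀ ⬝ᵥ (V' *ᵥ σ))) - 2 * (ν t₀ ⬝ᵥ (V' *ᵥ ν t₀))) := by
    have f1 : ν t₀ ⬝ᵥ ((V' * D * V t₀) *ᵥ ν t₀)
        = c * (ν t₀ ⬝ᵥ (V' *ᵥ σ)) - ν t₀ ⬝ᵥ (V' *ᵥ ν t₀) := by
      rw [← Matrix.mulVec_mulVec (M := V' * D) (N := V t₀), ← part1a t₀,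
        ← Matrix.mulVec_mulVec (M := V') (N := D), hDlam, Matrix.mulVec_sub,
        dotProduct_sub, Matrix.mulVec_smul, dotProduct_smul, smul_eq_mul]
    have f2 : ν t₀ ⬝ᵥ ((V t₀ * D * V') *ᵥ ν t₀)
        = c * (ν t₀ ⬝ᵥ (V' *ᵥ σ)) - ν t₀ ⬝ᵥ (V' *ᵥ ν t₀) := by
      have htr : (V t₀ * D * V')ᵀ = V' * D * V t₀ := by
        rw [Matrix.transpose_mul, Matrix.transpose_mul, hD.eq, (hVsymm t₀).eq, hV'symm.eq,
          mul_assoc]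
      rw [dot_transpose, htr, dotProduct_comm, f1]
    rw [Matrix.add_mulVec, dotProduct_add, Matrix.add_mulVec, dotProduct_add,
      f1, f2]
    ring
  have hfun : (fun t => σ ⬝ᵥ lam t) = fun t => g t + r t := funext key
  rw [hfun]
  have hsum := hg.fun_add hr
  refine hsum.congr_deriv ?_
  rw [hq]
  field_simp
  ring
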